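/- The translation group T(ψ) = { m(X, -ψ^t(X), Y) : X ∈ ℝ^t, Y ∈ ℝ^{n-t-1} } acts simply transitively on the horosphere ∂Ω = { x ∈ V : h(x) = 0 }. -/
import Mathlib


/-- The translation group `T(ψ) = { m(X, -ψ^t(X), Y) }` preserves the
horosphere `∂Ω = {v ∈ V : h v = 0}` and acts simply transitively on it. -/
theorem translation_group_simply_transitive_on_horosphere
    (t u : ℕ) (ψ : Fin t → ℝ)
    (hmono : ∀ i j : Fin t, i ≤ j → ψ j ≤ ψ i)
    (hpos : ∀ i : Fin t, 0 < ψ i) :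
    let h : (Fin t → ℝ) × ℝ × (Fin u → ℝ) → ℝ := fun p =>
      -p.2.1 - ∑ i : Fin t, ψ i * Real.log (p.1 i) + (∑ j : Fin u, (p.2.2 j) ^ 2) / 2
    let m : (Fin t → ℝ) → ℝ → (Fin u → ℝ) →
        (Fin t → ℝ) × ℝ × (Fin u → ℝ) → (Fin t → ℝ) × ℝ × (Fin u → ℝ) :=
      fun X Z Y p =>
        (fun i => Real.exp (X i) * p.1 i,
         p.2.1 + (∑ j : Fin u, Y j * p.2.2 j) + Z + (∑ j : Fin u, (Y j) ^ 2) / 2,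
         fun j => p.2.2 j + Y j)
    ∀ p q : (Fin t → ℝ) × ℝ × (Fin u → ℝ),
      (∀ i, 0 < p.1 i) → h p = 0 → (∀ i, 0 < q.1 i) → h q = 0 →
        (∀ (X : Fin t → ℝ) (Y : Fin u → ℝ),
          (∀ i, 0 < (m X (-(∑ i : Fin t, ψ i * X i)) Y p).1 i) ∧
          h (m X (-(∑ i : Fin t, ψ i * X i)) Y p) = 0) ∧
        (∃! w : (Fin t → ℝ) × (Fin u → ℝ),
          m w.1 (-(∑ i : Fin t, ψ i * w.1 i)) w.2 p = q) := by
  intro h m p q hp hhp hq hhq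
  have key : ∀ (X : Fin t → ℝ) (Y : Fin u → ℝ),
      h (m X (-(∑ i : Fin t, ψ i * X i)) Y p) = h p := by
    intro X Y
    simp only [h, m]
    have hlog : ∀ i, Real.log (Real.exp (X i) * p.1 i) = X i + Real.log (p.1 i) := by
      intro i
      rw [Real.log_mul (Real.exp_ne_zero _) (ne_of_gt (hp i)), Real.log_exp]
    simp only [hlog]
    have e1 : ∑ i : Fin t, ψ i * (X i + Real.log (p.1 i))
        = (∑ i : Fin t, ψ i * X i) + ∑ i : Fin t, ψ i * Real.log (p.1 i) := by
      rw [← Finset.sum_add_distrib]; exact Finset.sum_congr rfl (fun i _ => by ring)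
    have e2 : ∑ j : Fin u, (p.2.2 j + Y j) ^ 2
        = (∑ j : Fin u, (p.2.2 j) ^ 2) + 2 * (∑ j : Fin u, Y j * p.2.2 j)
          + ∑ j : Fin u, (Y j) ^ 2 := by
      rw [Finset.mul_sum, ← Finset.sum_add_distrib, ← Finset.sum_add_distrib]
      exact Finset.sum_congr rfl (fun j _ => by ring)
    rw [e1, e2]; ring
  refine ⟨fun X Y => ⟨fun i => mul_pos (Real.exp_pos _) (hp i), by rw [key X Y, hhp]⟩, ?_⟩
  refine ⟨⟨fun i => Real.log (q.1 i) - Real.log (p.1 i), fun j => q.2.2 j - p.2.2 j⟩, ?_, ?_⟩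
  · set X₀ : Fin t → ℝ := fun i => Real.log (q.1 i) - Real.log (p.1 i) with hX₀
    set Y₀ : Fin u → ℝ := fun j => q.2.2 j - p.2.2 j with hY₀
    set a := m X₀ (-(∑ i : Fin t, ψ i * X₀ i)) Y₀ p with ha
    have ha1 : a.1 = q.1 := by
      funext i
      show Real.exp (X₀ i) * p.1 i = q.1 i
      rw [hX₀]
      rw [Real.exp_sub, Real.exp_log (hq i), Real.exp_log (hp i)]
      field_simp
      exact mul_div_cancel_right₀ _ (ne_of_gt (hp i))
    have ha3 : a.2.2 = q.2.2 := by
      funext j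
      show p.2.2 j + Y₀ j = q.2.2 j
      simp [hY₀]
    have hha : h a = 0 := by rw [ha, key, hhp]
    have ha2 : a.2.1 = q.2.1 := by
      have h1 : -a.2.1 - ∑ i : Fin t, ψ i * Real.log (a.1 i)
          + (∑ j : Fin u, (a.2.2 j) ^ 2) / 2 = 0 := hha
      have h2 : -q.2.1 - ∑ i : Fin t, ψ i * Real.log (q.1 i)
          + (∑ j : Fin u, (q.2.2 j) ^ 2) / 2 = 0 := hhq
      rw [ha1, ha3] at h1
      clear_value a
      linarith
    calc a = (a.1, a.2.1, a.2.2) := rfl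
      _ = (q.1, q.2.1, q.2.2) := by rw [ha1, ha2, ha3]
      _ = q := rfl
  · rintro ⟨X, Y⟩ hw
    have hw1 : (fun i => Real.exp (X i) * p.1 i) = q.1 := congrArg Prod.fst hw
    have hw3 : (fun j => p.2.2 j + Y j) = q.2.2 := congrArg (fun r => r.2.2) hw
    have hX : X = fun i => Real.log (q.1 i) - Real.log (p.1 i) := by
      funext i
      have : Real.exp (X i) * p.1 i = q.1 i := congrFun hw1 i
      have hl := congrArg Real.log this
      rw [Real.log_mul (Real.exp_ne_zero _) (ne_of_gt (hp i)), Real.log_exp] at hl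
      linarith
    have hY : Y = fun j => q.2.2 j - p.2.2 j := by
      funext j
      have : p.2.2 j + Y j = q.2.2 j := congrFun hw3 j
      linarith
    rw [hX, hY]
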